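/- For every prime p ≥ 5 and every integer n ≥ 1, there is no integer e with ρ(2n−1) < e < ρ(2n) such that (2p²−2)·(e+1) ≡ 2p−2 (mod 2p^{2n}). (This is the arithmetic fact, from the proof of Lemma 7.8 of Ausoni–Rognes, that no class u_n λ₂ · μ₂^i (tμ₂)^e with v_p(i) = 2n−1 and ρ(2n−1) < e < ρ(2n) has the same total degree as y = (tμ₂)^{ρ(2n−1)} μ₂^j with v_p(j) = 2n−2.) -/

import Mathlib

/-- The Ausoni–Rognes numerical function ρ (as a function of the prime `p` and
the argument `m`): `ρ(2k−1) = ∑_{i=0}^{2k} (−1)^i p^{2k−i}` and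
`ρ(2k) = ∑_{j=1}^{k} p^{2j}`, so that `ρ(0) = 0`. -/
def rho (p m : ℕ) : ℤ :=
  if m % 2 = 1 then ∑ i ∈ Finset.range (m + 2), (-1 : ℤ) ^ i * (p : ℤ) ^ (m + 1 - i)
  else ∑ j ∈ Finset.range (m / 2), (p : ℤ) ^ (2 * (j + 1))

lemma aux_alt (P : ℤ) (N : ℕ) :
    (P + 1) * ∑ i ∈ Finset.range (N + 1), (-1 : ℤ) ^ i * P ^ (N - i)
      = P ^ (N + 1) + (-1) ^ N := by
  induction N with
  | zero => simp
  | succ N ih =>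
    rw [Finset.sum_range_succ']
    simp only [Nat.add_sub_add_right, Nat.sub_zero, pow_zero, one_mul]
    have h : ∑ i ∈ Finset.range (N + 1), (-1:ℤ)^(i+1) * P^(N - i)
        = -∑ i ∈ Finset.range (N + 1), (-1:ℤ)^i * P^(N - i) := by
      rw [← Finset.sum_neg_distrib]
      exact Finset.sum_congr rfl fun i _ => by ring
    rw [h]
    have : (P + 1) * (-∑ i ∈ Finset.range (N + 1), (-1:ℤ)^i * P^(N - i) + P ^ (N + 1))
        = -(P ^ (N + 1) + (-1) ^ N) + (P + 1) * P ^ (N + 1) := by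
      rw [← ih]; ring
    rw [this]; ring

theorem no_e_lemma_7_8_a (p : ℕ) (hp : p.Prime) (h5 : 5 ≤ p)
    (n : ℕ) (hn : 1 ≤ n) :
    ¬ ∃ e : ℤ, rho p (2 * n - 1) < e ∧ e < rho p (2 * n) ∧
      (2 * (p : ℤ) ^ 2 - 2) * (e + 1) ≡ 2 * (p : ℤ) - 2 [ZMOD 2 * (p : ℤ) ^ (2 * n)] := by
  rintro ⟨e, h1, h2, h3⟩
  set P : ℤ := (p : ℤ) with hPdef
  have hp5 : (5:ℤ) ≤ P := by rw [hPdef]; exact_mod_cast h5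
  set T : ℤ := ∑ j ∈ Finset.range n, P ^ (2 * j) with hTdef
  have hQpos : (0:ℤ) < P ^ (2 * n) := by positivity
  have hQge : P ^ 2 ≤ P ^ (2 * n) := by
    apply pow_le_pow_right₀ (by linarith) (by omega)
  -- geometric sum identity
  have hgeom : (P ^ 2 - 1) * T = P ^ (2 * n) - 1 := by
    have hT : T = ∑ j ∈ Finset.range n, (P ^ 2) ^ j := by
      exact Finset.sum_congr rfl fun j _ => by rw [pow_mul]
    rw [hT, mul_comm, geom_sum_mul, ← pow_mul]
  -- rho at even argument
  have hrho_even : rho p (2 * n) = P ^ 2 * T := by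
    have hmod : ¬ (2 * n) % 2 = 1 := by omega
    rw [rho, if_neg hmod]
    have : 2 * n / 2 = n := by omega
    rw [this, Finset.mul_sum]
    exact Finset.sum_congr rfl fun j _ => by rw [← pow_add]; ring_nf; rfl
  -- rho at odd argument
  have hodd := aux_alt P (2 * n)
  have hPne : (P + 1) ≠ 0 := by linarith
  have hrho_odd : rho p (2 * n - 1) = (1 - P) * T + P ^ (2 * n) := by
    have hmod : (2 * n - 1) % 2 = 1 := by omega
    apply mul_left_cancel₀ hPne
    have e1 : 2 * n - 1 + 2 = 2 * n + 1 := by omega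
    have e2 : 2 * n - 1 + 1 = 2 * n := by omega
    rw [rho, if_pos hmod, e1, e2, hodd]
    have hne : (-1 : ℤ) ^ (2 * n) = 1 := by rw [pow_mul]; norm_num
    rw [hne]
    have : (P + 1) * ((1 - P) * T + P ^ (2 * n))
        = -((P ^ 2 - 1) * T) + (P + 1) * P ^ (2 * n) := by ring
    rw [this, hgeom]; ring
  -- from the congruence: P^(2n) ∣ (P+1)*(e+1) - 1
  have hdvd0 : (2 * P ^ (2 * n)) ∣ (2 * ((P ^ 2 - 1) * (e + 1) - (P - 1))) := by
    have := Int.ModEq.dvd h3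
    have heq : 2 * P - 2 - (2 * P ^ 2 - 2) * (e + 1)
        = -(2 * ((P ^ 2 - 1) * (e + 1) - (P - 1))) := by ring
    rw [heq] at this
    exact (dvd_neg.mp this)
  have hdvd1 : P ^ (2 * n) ∣ ((P ^ 2 - 1) * (e + 1) - (P - 1)) :=
    (mul_dvd_mul_iff_left (two_ne_zero)).mp hdvd0
  have hcop1 : IsCoprime (P ^ (2 * n)) (P - 1) :=
    IsCoprime.pow_left ⟨1, -1, by ring⟩
  have hcop2 : IsCoprime (P ^ (2 * n)) (P + 1) :=
    IsCoprime.pow_left ⟨-1, 1, by ring⟩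
  have hdvd2 : P ^ (2 * n) ∣ ((P + 1) * (e + 1) - 1) := by
    apply hcop1.dvd_of_dvd_mul_left
    have heq : (P - 1) * ((P + 1) * (e + 1) - 1)
        = (P ^ 2 - 1) * (e + 1) - (P - 1) := by ring
    rw [heq]; exact hdvd1
  -- key: e + 1 ≡ S where S = (1-P)*T
  have hdvd3 : P ^ (2 * n) ∣ (e + 1 - (1 - P) * T) := by
    apply hcop2.dvd_of_dvd_mul_left
    have heq : (P + 1) * (e + 1 - (1 - P) * T)
        = ((P + 1) * (e + 1) - 1) + ((P ^ 2 - 1) * T - (P ^ (2*n) - 1)) + P ^ (2*n) := by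
      ring
    rw [heq, hgeom]
    simp only [sub_self, add_zero]
    exact dvd_add hdvd2 dvd_rfl
  obtain ⟨k, hk⟩ := hdvd3
  rw [hrho_odd] at h1
  rw [hrho_even] at h2
  -- k ≥ 2
  have hk2 : 2 ≤ k := by nlinarith
  -- hence e ≥ (1-P)*T - 1 + 2*P^(2n), contradicting e < P^2*T
  -- P*T ≤ P^(2n)
  have hPT : P * T ≤ P ^ (2 * n) := by
    have hfac : (0:ℤ) < P ^ 2 - 1 := by nlinarith
    apply le_of_mul_le_mul_left _ hfac
    calc (P ^ 2 - 1) * (P * T) = P * P ^ (2 * n) - P := by linear_combination P * hgeom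
      _ ≤ (P ^ 2 - 1) * P ^ (2 * n) := by
          nlinarith [mul_pos hQpos (show (0:ℤ) < P ^ 2 - P - 1 by nlinarith)]
  nlinarith
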